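/- For all j ∈ ℤ and k ≥ 0 with j+k even: Y_{j,k} = (∏_{i=−k}^{k} y_{j+3i}) · F_{j−1,k}·F_{j+1,k} / (F_{j−3,k}·F_{j+3,k}) in K. (This is the separation of the Y-pattern variables of the pentagram map into a tropical monomial and F-polynomials.) -/

import Mathlib

open scoped Classical

noncomputable section

/-- The field `K = ℚ(y₁,…,y_{2n})`, realized as the fraction field of the
polynomial ring in `2n` indeterminates indexed by `ZMod (2n)` (which builds in
the `2n`-periodicity of the indices). -/
abbrev KK (n : ℕ) : Type := FractionRing (MvPolynomial (ZMod (2*n)) ℚ)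

/-- The indeterminate `y_j` for `j ∈ ℤ`, with `y_{j+2n} = y_j`. -/
def yy (n : ℕ) (j : ℤ) : KK n :=
  algebraMap (MvPolynomial (ZMod (2*n)) ℚ) (KK n) (MvPolynomial.X (j : ZMod (2*n)))

namespace Stmt6Aux

/-- Evaluation of polynomials at the all-ones point. -/
def ev (n : ℕ) : MvPolynomial (ZMod (2*n)) ℚ →+* ℚ := MvPolynomial.eval (fun _ => 1)

/-- "Positivity" of an element of `KK n`: it can be written as a fraction `p/q`
of polynomials whose values at the all-ones point have positive product. -/
def Pos (n : ℕ) (x : KK n) : Prop :=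
  ∃ p q : MvPolynomial (ZMod (2*n)) ℚ,
    0 < ev n p * ev n q ∧
      x * algebraMap (MvPolynomial (ZMod (2*n)) ℚ) (KK n) q
        = algebraMap (MvPolynomial (ZMod (2*n)) ℚ) (KK n) p

theorem Pos_ne_zero {n : ℕ} {x : KK n} (h : Pos n x) : x ≠ 0 := by
  obtain ⟨p, q, hpq, hx⟩ := h
  intro h0
  subst h0
  rw [zero_mul] at hx
  have hp : p ≠ 0 := by
    intro hp0; subst hp0; simp at hpq
  exact hp (IsFractionRing.injective (MvPolynomial (ZMod (2*n)) ℚ) (KK n)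
    (by simpa using hx.symm))

theorem Pos_one {n : ℕ} : Pos n 1 :=
  ⟨1, 1, by simp, by simp⟩

theorem Pos_yy {n : ℕ} (j : ℤ) : Pos n (yy n j) :=
  ⟨MvPolynomial.X ((j : ZMod (2*n))), 1, by simp [ev], by simp [yy]⟩

theorem Pos_mul {n : ℕ} {x y : KK n} (hx : Pos n x) (hy : Pos n y) :
    Pos n (x * y) := by
  obtain ⟨p, q, hpq, hx⟩ := hx
  obtain ⟨r, s, hrs, hy⟩ := hy
  refine ⟨p * r, q * s, ?_, ?_⟩
  · have : ev n p * ev n q * (ev n r * ev n s) > 0 := mul_pos hpq hrs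
    rw [map_mul, map_mul]; nlinarith
  · rw [map_mul, map_mul]
    calc x * y * (algebraMap _ (KK n) q * algebraMap _ (KK n) s)
        = (x * algebraMap _ (KK n) q) * (y * algebraMap _ (KK n) s) := by ring
      _ = _ := by rw [hx, hy]

theorem Pos_add {n : ℕ} {x y : KK n} (hx : Pos n x) (hy : Pos n y) :
    Pos n (x + y) := by
  obtain ⟨p, q, hpq, hx⟩ := hx
  obtain ⟨r, s, hrs, hy⟩ := hy
  have hq : ev n q ≠ 0 := by intro h; rw [h] at hpq; simp at hpq
  have hs : ev n s ≠ 0 := by intro h; rw [h] at hrs; simp at hrs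
  refine ⟨p * s + q * r, q * s, ?_, ?_⟩
  · rw [map_add, map_mul, map_mul, map_mul]
    have h1 : 0 < (ev n p * ev n q) * (ev n s)^2 := by positivity
    have h2 : 0 < (ev n r * ev n s) * (ev n q)^2 := by positivity
    nlinarith
  · rw [map_add, map_mul, map_mul, map_mul]
    calc (x + y) * (algebraMap _ (KK n) q * algebraMap _ (KK n) s)
        = (x * algebraMap _ (KK n) q) * algebraMap _ (KK n) s
          + algebraMap _ (KK n) q * (y * algebraMap _ (KK n) s) := by ring
      _ = _ := by rw [hx, hy]; try ring

theorem Pos_inv {n : ℕ} {x : KK n} (hx : Pos n x) : Pos n x⁻¹ := by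
  obtain ⟨p, q, hpq, hx'⟩ := hx
  have hxne : x ≠ 0 := Pos_ne_zero ⟨p, q, hpq, hx'⟩
  refine ⟨q, p, by nlinarith, ?_⟩
  rw [← hx']
  field_simp
  try ring

theorem Pos_div {n : ℕ} {x y : KK n} (hx : Pos n x) (hy : Pos n y) :
    Pos n (x / y) := by
  rw [div_eq_mul_inv]; exact Pos_mul hx (Pos_inv hy)

theorem Pos_prod {n : ℕ} {s : Finset ℤ} {f : ℤ → KK n}
    (h : ∀ i ∈ s, Pos n (f i)) : Pos n (∏ i ∈ s, f i) :=
  Finset.prod_induction f (Pos n) (fun _ _ => Pos_mul) Pos_one h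

/-- Splitting products over `Ioc` intervals in `ℤ`. -/
theorem prod_Ioc_consec {n : ℕ} (f : ℤ → KK n) {a b c : ℤ} (hab : a ≤ b) (hbc : b ≤ c) :
    (∏ i ∈ Finset.Ioc a b, f i) * ∏ i ∈ Finset.Ioc b c, f i = ∏ i ∈ Finset.Ioc a c, f i := by
  rw [← Finset.prod_union, Finset.Ioc_union_Ioc_eq_Ioc hab hbc]
  rw [Finset.disjoint_left]
  intro x hx hx'
  simp only [Finset.mem_Ioc] at hx hx'
  omega

theorem Icc_eq_Ioc (a b : ℤ) : Finset.Icc a b = Finset.Ioc (a - 1) b := by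
  ext x; simp only [Finset.mem_Icc, Finset.mem_Ioc]; omega

/-- Shift lemma for products of `yy`. -/
theorem prod_shift (n : ℕ) (j c t : ℤ) :
    (∏ i ∈ Finset.Icc (-t) t, yy n (j + 3*c + 3*i))
      = ∏ i ∈ Finset.Icc (-t + c) (t + c), yy n (j + 3*i) := by
  rw [← Finset.map_add_right_Icc, Finset.prod_map]
  refine Finset.prod_congr rfl fun i _ => ?_
  simp only [addRightEmbedding_apply]
  congr 1
  ring

/-- The key monomial identity. -/
theorem Mlem (n : ℕ) (j t : ℤ) (ht : 1 ≤ t) :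
    (∏ i ∈ Finset.Icc (-t) t, yy n (j - 3 + 3*i)) *
      (∏ i ∈ Finset.Icc (-t) t, yy n (j + 3 + 3*i)) =
    (∏ i ∈ Finset.Icc (-(t+1)) (t+1), yy n (j + 3*i)) *
      (∏ i ∈ Finset.Icc (-(t-1)) (t-1), yy n (j + 3*i)) := by
  have h1 : (∏ i ∈ Finset.Icc (-t) t, yy n (j - 3 + 3*i))
      = ∏ i ∈ Finset.Icc (-t + -1) (t + -1), yy n (j + 3*i) := by
    rw [← prod_shift n j (-1) t]
    refine Finset.prod_congr rfl fun i _ => ?_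
    congr 1; try ring
  have h2 : (∏ i ∈ Finset.Icc (-t) t, yy n (j + 3 + 3*i))
      = ∏ i ∈ Finset.Icc (-t + 1) (t + 1), yy n (j + 3*i) := by
    rw [← prod_shift n j 1 t]
    refine Finset.prod_congr rfl fun i _ => ?_
    congr 1; try ring
  rw [h1, h2]
  set f : ℤ → KK n := fun i => yy n (j + 3*i) with hf
  rw [Icc_eq_Ioc, Icc_eq_Ioc, Icc_eq_Ioc, Icc_eq_Ioc]
  have e1 : (∏ i ∈ Finset.Ioc (-t + -1 - 1) (t + -1), f i)
      = (∏ i ∈ Finset.Ioc (-t + -1 - 1) (-t + 1 - 1), f i) *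
        ∏ i ∈ Finset.Ioc (-t + 1 - 1) (t + -1), f i :=
    (prod_Ioc_consec f (by omega) (by omega)).symm
  have e2 : (∏ i ∈ Finset.Ioc (-(t+1) - 1) (t+1), f i)
      = (∏ i ∈ Finset.Ioc (-(t+1) - 1) (-t + 1 - 1), f i) *
        ∏ i ∈ Finset.Ioc (-t + 1 - 1) (t+1), f i :=
    (prod_Ioc_consec f (by omega) (by omega)).symm
  have b1 : (-t + -1 - 1 : ℤ) = -(t+1) - 1 := by ring
  have b2 : (-(t-1) - 1 : ℤ) = -t + 1 - 1 := by ring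
  have b3 : (t + -1 : ℤ) = t - 1 := by ring
  rw [e1, e2, b1, b2, b3]
  ring

end Stmt6Aux

open Stmt6Aux in
/-- **Separation of the Y-pattern variables of the pentagram map into a tropical
monomial and F-polynomials (equations (9)-(10) of the paper).**
With `Y_{j,k}` defined by the `Y`-pattern recursion and `F_{j,k}` by the
`F`-polynomial recursion, for all `k ≥ 0` with `j+k` even:
`Y_{j,k} = (∏_{i=−k}^{k} y_{j+3i}) · F_{j−1,k} F_{j+1,k} / (F_{j−3,k} F_{j+3,k})`. -/
theorem stmt6 (n : ℕ) (hn : 2 ≤ n)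
    (Y : ℤ → ℤ → KK n) (F : ℤ → ℤ → KK n)
    (hY1 : ∀ j : ℤ, Odd j → Y j (-1) = (yy n j)⁻¹)
    (hY2 : ∀ j : ℤ, Even j → Y j 0 = yy n j)
    (hY3 : ∀ j k : ℤ, 1 ≤ k → Even (j+k) →
      Y j k = (Y (j-3) (k-1) * Y (j+3) (k-1) / Y j (k-2)) *
        ((1 + Y (j-1) (k-1)) * (1 + Y (j+1) (k-1)) /
         ((1 + Y (j-3) (k-1)) * (1 + Y (j+3) (k-1)))))
    (hY4 : ∀ j k : ℤ, 0 ≤ k → Odd (j+k) → Y j k = (Y j (k-1))⁻¹)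
    (hF1 : ∀ j : ℤ, F j (-1) = 1)
    (hF2 : ∀ j : ℤ, F j 0 = 1)
    (hF3 : ∀ j k : ℤ, 0 ≤ k →
      F j (k+1) = (F (j-3) k * F (j+3) k +
        (∏ i ∈ Finset.Icc (-k) k, yy n (j+3*i)) * F (j-1) k * F (j+1) k) /
        F j (k-1)) :
    ∀ j k : ℤ, 0 ≤ k → Even (j+k) →
      Y j k = (∏ i ∈ Finset.Icc (-k) k, yy n (j+3*i)) *
        (F (j-1) k * F (j+1) k) / (F (j-3) k * F (j+3) k) := by
  -- notation for the tropical monomials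
  set M : ℤ → ℤ → KK n := fun j t => ∏ i ∈ Finset.Icc (-t) t, yy n (j + 3*i) with hM
  -- positivity of monomials
  have hMpos : ∀ j t : ℤ, Pos n (M j t) := fun j t =>
    Pos_prod (fun i _ => Pos_yy _)
  -- positivity of the F's at levels ≥ -1
  have hFpos : ∀ m : ℕ, ∀ j : ℤ, Pos n (F j (m : ℤ)) := by
    intro m
    induction m using Nat.strong_induction_on with
    | _ m ih =>
      match m with
      | 0 => intro j; simp only [Nat.cast_zero]; rw [hF2]; exact Pos_one
      | (m+1) =>
        intro j
        have h := hF3 j m (by positivity)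
        push_cast at h ⊢
        rw [h]
        have hprev : Pos n (F j ((m : ℤ) - 1)) := by
          match m with
          | 0 => simp only [Nat.cast_zero, zero_sub, hF1]; exact Pos_one
          | (m'+1) =>
            have : ((m' + 1 : ℕ) : ℤ) - 1 = (m' : ℤ) := by push_cast; ring
            rw [this]; exact ih m' (by omega) j
        have hm : ∀ a : ℤ, Pos n (F a (m : ℤ)) := ih m (by omega)
        exact Pos_div
          (Pos_add (Pos_mul (hm _) (hm _))
            (Pos_mul (Pos_mul (hMpos j m) (hm _)) (hm _)))
          hprev
  have hFne : ∀ m : ℕ, ∀ j : ℤ, F j (m : ℤ) ≠ 0 := fun m j => Pos_ne_zero (hFpos m j)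
  have hMne : ∀ j t : ℤ, M j t ≠ 0 := fun j t => Pos_ne_zero (hMpos j t)
  have hyne : ∀ j : ℤ, yy n j ≠ 0 := fun j => Pos_ne_zero (Pos_yy j)
  -- the F recursion in product form
  have hFrec : ∀ (a : ℤ) (m : ℕ),
      F a ((m : ℤ) + 1) * F a ((m : ℤ) - 1)
        = F (a-3) m * F (a+3) m + M a m * F (a-1) m * F (a+1) m := by
    intro a m
    have hprev : F a ((m : ℤ) - 1) ≠ 0 := by
      match m with
      | 0 => simp only [Nat.cast_zero, zero_sub, hF1]; exact one_ne_zero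
      | (m'+1) =>
        have : ((m' + 1 : ℕ) : ℤ) - 1 = (m' : ℤ) := by push_cast; ring
        rw [this]; exact hFne m' a
    rw [hF3 a m (by positivity)]
    field_simp
    simp only [hM]
    ring
  -- main claim, by strong induction over ℕ
  suffices H : ∀ K : ℕ, ∀ j : ℤ, Even (j + (K : ℤ)) →
      Y j K = M j K * (F (j-1) K * F (j+1) K) / (F (j-3) K * F (j+3) K) by
    intro j k hk he
    obtain ⟨K, rfl⟩ := Int.eq_ofNat_of_zero_le hk
    exact H K j he
  intro K
  induction K using Nat.strong_induction_on with
  | _ K ih =>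
    match K with
    | 0 =>
      intro j hj
      have hje : Even j := by simpa using hj
      have : M j 0 = yy n j := by
        rw [hM]
        simp only [neg_zero, Finset.Icc_self, Finset.prod_singleton, mul_zero, add_zero]
      simp only [Nat.cast_zero, hY2 j hje, this, hF2]
      ring
    | (K'+1) =>
      intro j hj
      obtain ⟨r, hr⟩ := hj
      have hr' : j + ((K' : ℤ) + 1) = r + r := by push_cast at hr ⊢; omega
      have hYrec := hY3 j ((K' : ℤ) + 1) (by omega) ⟨r, by omega⟩
      have hc1 : ((K' : ℤ) + 1) - 1 = (K' : ℤ) := by ring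
      have hc2 : ((K' : ℤ) + 1) - 2 = (K' : ℤ) - 1 := by ring
      rw [hc1, hc2] at hYrec
      -- the (1 + Y a K') formula, valid whenever Even (a + K')
      have oneAdd : ∀ a : ℤ, Even (a + (K' : ℤ)) →
          1 + Y a K' = F a ((K' : ℤ) + 1) * F a ((K' : ℤ) - 1)
            / (F (a-3) K' * F (a+3) K') := by
        intro a ha
        rw [ih K' (by omega) a ha,
          eq_div_iff (mul_ne_zero (hFne K' (a-3)) (hFne K' (a+3))), hFrec a K']
        field_simp [hFne K' (a-3), hFne K' (a+3)]
        try ring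
      -- parity facts
      have hp1l : Even ((j-1) + (K' : ℤ)) := ⟨r - 1, by omega⟩
      have hp1r : Even ((j+1) + (K' : ℤ)) := ⟨r, by omega⟩
      have hp3l : Even ((j-3) + (K' : ℤ)) := ⟨r - 2, by omega⟩
      have hp3r : Even ((j+3) + (K' : ℤ)) := ⟨r + 1, by omega⟩
      have hY3l := ih K' (by omega) (j-3) hp3l
      have hY3r := ih K' (by omega) (j+3) hp3r
      have i1 : (j - 3 : ℤ) - 1 = j - 4 := by ring
      have i2 : (j - 3 : ℤ) + 1 = j - 2 := by ring
      have i3 : (j - 3 : ℤ) - 3 = j - 6 := by ring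
      have i4 : (j - 3 : ℤ) + 3 = j := by ring
      have i5 : (j + 3 : ℤ) - 1 = j + 2 := by ring
      have i6 : (j + 3 : ℤ) + 1 = j + 4 := by ring
      have i7 : (j + 3 : ℤ) - 3 = j := by ring
      have i8 : (j + 3 : ℤ) + 3 = j + 6 := by ring
      have i9 : (j - 1 : ℤ) - 3 = j - 4 := by ring
      have i10 : (j - 1 : ℤ) + 3 = j + 2 := by ring
      have i11 : (j + 1 : ℤ) - 3 = j - 2 := by ring
      have i12 : (j + 1 : ℤ) + 3 = j + 4 := by ring
      rw [i1, i2, i3, i4] at hY3l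
      rw [i5, i6, i7, i8] at hY3r
      have h1l := oneAdd (j-1) hp1l; rw [i9, i10] at h1l
      have h1r := oneAdd (j+1) hp1r; rw [i11, i12] at h1r
      have h3l := oneAdd (j-3) hp3l; rw [i3, i4] at h3l
      have h3r := oneAdd (j+3) hp3r; rw [i7, i8] at h3r
      -- rewrite the goal-side cast
      have hgc : ((K' + 1 : ℕ) : ℤ) = (K' : ℤ) + 1 := by push_cast; ring
      rw [hgc]
      rw [hYrec, h3l, h3r, h1l, h1r, hY3l, hY3r]
      -- nonzero facts at level K' and K'+1
      have hFK : ∀ a : ℤ, F a (K' : ℤ) ≠ 0 := hFne K'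
      have hFK1 : ∀ a : ℤ, F a ((K' : ℤ) + 1) ≠ 0 := by
        intro a
        have : ((K' : ℤ) + 1) = ((K' + 1 : ℕ) : ℤ) := by push_cast; ring
        rw [this]; exact hFne (K' + 1) a
      match K', hYrec, h1l, h1r, h3l, h3r, hFK, hFK1 with
      | 0, hYrec, h1l, h1r, h3l, h3r, hFK, hFK1 =>
        -- bottom step: Y j (-1) = (yy j)⁻¹
        have hodd : Odd j := ⟨r - 1, by omega⟩
        simp only [Nat.cast_zero, zero_sub, zero_add] at hFK hFK1 ⊢
        rw [hY1 j hodd]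
        have hMzero : ∀ a : ℤ, M a (0 : ℤ) = yy n a := by
          intro a
          rw [hM]
          simp only [neg_zero, Finset.Icc_self, Finset.prod_singleton, mul_zero, add_zero]
        have hMone : M j (1 : ℤ) = yy n (j - 3) * (yy n j * yy n (j + 3)) := by
          rw [hM]
          simp only []
          have hIcc : Finset.Icc (-(1:ℤ)) 1 = {-1, 0, 1} := by decide
          rw [hIcc, Finset.prod_insert (by decide), Finset.prod_insert (by decide),
            Finset.prod_singleton,
            show j + 3 * (-1) = j - 3 by ring, show j + 3 * 0 = j by ring,
            show j + 3 * 1 = j + 3 by ring]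
        rw [hMone]
        simp only [hF1, hF2, hMzero, mul_one, one_mul]
        have h1 := hyne (j - 3)
        have h2 := hyne j
        have h3 := hyne (j + 3)
        have h4 := hFK1 (j-1)
        have h5 := hFK1 (j+1)
        have h6 := hFK1 (j-3)
        have h7 := hFK1 (j+3)
        field_simp
      | (m+1), hYrec, h1l, h1r, h3l, h3r, hFK, hFK1 =>
        -- generic step: level K' - 1 = m is handled by the IH
        have hcm : ((m + 1 : ℕ) : ℤ) - 1 = (m : ℤ) := by push_cast; ring
        rw [hcm]
        have hpj : Even (j + (m : ℤ)) := ⟨r - 1, by push_cast at hr' ⊢; omega⟩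
        have hYprev := ih m (by omega) j hpj
        rw [hYprev]
        -- monomial identity
        have hMsplit : M (j-3) ((m+1 : ℕ) : ℤ) * M (j+3) ((m+1 : ℕ) : ℤ)
            = M j (((m+1 : ℕ) : ℤ) + 1) * M j ((m : ℤ)) := by
          have := Mlem n j ((m+1 : ℕ) : ℤ) (by push_cast; omega)
          rw [hM]
          simp only []
          rw [show ((m:ℤ)) = (((m+1:ℕ):ℤ) - 1) by push_cast; ring]
          exact this
        have hMtop : M j (((m+1 : ℕ) : ℤ) + 1)
            = M (j-3) ((m+1 : ℕ) : ℤ) * M (j+3) ((m+1 : ℕ) : ℤ) / M j ((m : ℤ)) := by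
          rw [eq_div_iff (hMne j (m : ℤ))]
          exact hMsplit.symm
        rw [hMtop]
        have n1 := hFK (j-6); have n2 := hFK (j-4); have n3 := hFK (j-2)
        have n4 := hFK j; have n5 := hFK (j+2); have n6 := hFK (j+4)
        have n7 := hFK (j+6)
        have n8 := hFne m (j-3); have n9 := hFne m (j-1)
        have n10 := hFne m (j+1); have n11 := hFne m (j+3)
        have n12 := hFK1 (j-3); have n13 := hFK1 (j+3)
        have n14 := hMne (j-3) ((m+1 : ℕ) : ℤ); have n15 := hMne (j+3) ((m+1 : ℕ) : ℤ)
        have n16 := hMne j ((m : ℤ))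
        revert n1 n2 n3 n4 n5 n6 n7 n8 n9 n10 n11 n12 n13 n14 n15 n16
        generalize M (j-3) ((m+1 : ℕ) : ℤ) = A1
        generalize M (j+3) ((m+1 : ℕ) : ℤ) = A2
        generalize M j (m : ℤ) = A3
        generalize F (j-6) ((m+1 : ℕ) : ℤ) = B1
        generalize F (j-4) ((m+1 : ℕ) : ℤ) = B2
        generalize F (j-2) ((m+1 : ℕ) : ℤ) = B3
        generalize F j ((m+1 : ℕ) : ℤ) = B4
        generalize F (j+2) ((m+1 : ℕ) : ℤ) = B5
        generalize F (j+4) ((m+1 : ℕ) : ℤ) = B6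
        generalize F (j+6) ((m+1 : ℕ) : ℤ) = B7
        generalize F (j-3) ((m : ℕ) : ℤ) = C1
        generalize F (j-1) ((m : ℕ) : ℤ) = C2
        generalize F (j+1) ((m : ℕ) : ℤ) = C3
        generalize F (j+3) ((m : ℕ) : ℤ) = C4
        generalize F (j-3) (((m+1 : ℕ) : ℤ) + 1) = D1
        generalize F (j-1) (((m+1 : ℕ) : ℤ) + 1) = D2
        generalize F (j+1) (((m+1 : ℕ) : ℤ) + 1) = D3
        generalize F (j+3) (((m+1 : ℕ) : ℤ) + 1) = D4
        intro n1 n2 n3 n4 n5 n6 n7 n8 n9 n10 n11 n12 n13 n14 n15 n16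
        have e1 : A1 * (B2 * B3) / (B1 * B4) * (A2 * (B5 * B6) / (B4 * B7)) /
              (A3 * (C2 * C3) / (C1 * C4)) *
            (D2 * C2 / (B2 * B5) * (D3 * C3 / (B3 * B6)) /
              (D1 * C1 / (B1 * B4) * (D4 * C4 / (B4 * B7))))
          = (A1*B2*B3*A2*B5*B6*C1*C4*D2*C2*D3*C3*B1*B4*B4*B7) /
            (B1*B4*B4*B7*A3*C2*C3*B2*B5*B3*B6*D1*C1*D4*C4) := by
          simp only [div_eq_mul_inv, mul_inv, inv_inv]; ring
        have e2 : A1 * A2 / A3 * (D2 * D3) / (D1 * D4)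
            = (A1*A2*D2*D3) / (A3*D1*D4) := by
          simp only [div_eq_mul_inv, mul_inv, inv_inv]; ring
        rw [e1, e2, div_eq_div_iff (by apply_rules [mul_ne_zero]) (by apply_rules [mul_ne_zero])]
        ring
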